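/- Let T > 0. Let x^n, x : [0,T] → ℝ be continuous with sup_{t ∈ [0,T]} |x^n(t) − x(t)| → 0 as n → ∞. Let k^n, k be Stieltjes functions with sup_n (k^n(T) − k^n(0)) < ∞, and let Q ⊆ [0,T) be a set of Lebesgue measure zero with 0 ∉ Q such that k^n(t) → k(t) as n → ∞ for every t ∈ [0,T] ∖ Q. Then ∫_{(0,T]} |x(r)| μ_k(dr) ≤ liminf_{n → ∞} ∫_{(0,T]} |x^n(r)| μ_{k^n}(dr). -/

import Mathlib

open Filter Topology MeasureTheory

private lemma exists_notMem_of_null {Q : Set ℝ} (hQ : MeasureTheory.volume Q = 0) {a b : ℝ}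
    (hab : a < b) : ∃ s, s ∈ Set.Ioo a b ∧ s ∉ Q := by
  by_contra h
  push_neg at h
  have h0 : volume (Set.Ioo a b) = 0 :=
    le_antisymm (hQ ▸ measure_mono (fun s hs => h s hs)) zero_le
  rw [Real.volume_Ioo] at h0
  have := ENNReal.ofReal_eq_zero.mp h0
  linarith

private lemma my_setIntegral_le_const {μ : Measure ℝ} {f : ℝ → ℝ} {s : Set ℝ}
    (hs : MeasurableSet s) (hμ : μ s ≠ ⊤) (hf : IntegrableOn f s μ) {C : ℝ}
    (h : ∀ r ∈ s, f r ≤ C) : ∫ r in s, f r ∂μ ≤ C * (μ s).toReal := by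
  have h2 : IntegrableOn (fun _ => C) s μ := integrableOn_const hμ
  have := MeasureTheory.setIntegral_mono_on hf h2 hs h
  simpa [MeasureTheory.setIntegral_const, smul_eq_mul, mul_comm, MeasureTheory.measureReal_def] using this

private lemma my_const_le_setIntegral {μ : Measure ℝ} {f : ℝ → ℝ} {s : Set ℝ}
    (hs : MeasurableSet s) (hμ : μ s ≠ ⊤) (hf : IntegrableOn f s μ) {C : ℝ}
    (h : ∀ r ∈ s, C ≤ f r) : C * (μ s).toReal ≤ ∫ r in s, f r ∂μ := by
  have h2 : IntegrableOn (fun _ => C) s μ := integrableOn_const hμ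
  have := MeasureTheory.setIntegral_mono_on h2 hf hs h
  simpa [MeasureTheory.setIntegral_const, smul_eq_mul, mul_comm, MeasureTheory.measureReal_def] using this

private lemma chain_le (t : ℕ → ℝ) : ∀ {m : ℕ}, (∀ i, i < m → t i ≤ t (i+1)) → t 0 ≤ t m := by
  intro m
  induction m with
  | zero => exact fun _ => le_rfl
  | succ m ih =>
    intro h
    exact (ih fun i hi => h i (hi.trans (Nat.lt_succ_self m))).trans (h m (Nat.lt_succ_self m))

private lemma integral_Ioc_partition (μ : Measure ℝ) (f : ℝ → ℝ) (t : ℕ → ℝ) :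
    ∀ m : ℕ, (∀ i, i < m → t i ≤ t (i+1)) → IntegrableOn f (Set.Ioc (t 0) (t m)) μ →
      ∫ r in Set.Ioc (t 0) (t m), f r ∂μ
        = ∑ i ∈ Finset.range m, ∫ r in Set.Ioc (t i) (t (i+1)), f r ∂μ := by
  intro m
  induction m with
  | zero => simp
  | succ m ih =>
    intro hmono hint
    have hmono' : ∀ i, i < m → t i ≤ t (i+1) := fun i hi => hmono i (hi.trans (Nat.lt_succ_self m))
    have h0m : t 0 ≤ t m := chain_le t hmono'
    have hm1 : t m ≤ t (m+1) := hmono m (Nat.lt_succ_self m)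
    have hunion : Set.Ioc (t 0) (t (m+1)) = Set.Ioc (t 0) (t m) ∪ Set.Ioc (t m) (t (m+1)) :=
      (Set.Ioc_union_Ioc_eq_Ioc h0m hm1).symm
    have hint1 : IntegrableOn f (Set.Ioc (t 0) (t m)) μ :=
      hint.mono_set (Set.Ioc_subset_Ioc_right hm1)
    have hint2 : IntegrableOn f (Set.Ioc (t m) (t (m+1))) μ :=
      hint.mono_set (Set.Ioc_subset_Ioc_left h0m)
    rw [hunion, MeasureTheory.setIntegral_union (Set.Ioc_disjoint_Ioc_of_le le_rfl) measurableSet_Ioc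
      hint1 hint2, ih hmono' hint1, Finset.sum_range_succ]

/-- Fatou-type lower semicontinuity in the Helly–Bray setting: if `xⁿ → x` uniformly on
`[0,T]` (`xⁿ, x` continuous), the Stieltjes functions `kⁿ` have uniformly bounded
variation on `[0,T]`, and `kⁿ(t) → k(t)` for all `t ∈ [0,T]` outside a Lebesgue-null
set `Q ⊆ [0,T)` with `0 ∉ Q`, then
`∫_{(0,T]} |x| dk ≤ liminf_n ∫_{(0,T]} |xⁿ| dkⁿ`. -/
theorem helly_bray_liminf_abs (T : ℝ) (hT : 0 < T)
    (xn : ℕ → ℝ → ℝ) (x : ℝ → ℝ)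
    (hxnc : ∀ n, ContinuousOn (xn n) (Set.Icc 0 T)) (hxc : ContinuousOn x (Set.Icc 0 T))
    (hxu : TendstoUniformlyOn xn x atTop (Set.Icc 0 T))
    (kn : ℕ → StieltjesFunction ℝ) (k : StieltjesFunction ℝ)
    (hbd : ∃ M : ℝ, ∀ n, kn n T - kn n 0 ≤ M)
    (Q : Set ℝ) (hQsub : Q ⊆ Set.Ico 0 T) (hQ0 : (0 : ℝ) ∉ Q)
    (hQnull : MeasureTheory.volume Q = 0)
    (hkconv : ∀ t ∈ Set.Icc (0 : ℝ) T \ Q, Tendsto (fun n => kn n t) atTop (nhds (k t))) :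
    (∫ r in Set.Ioc (0 : ℝ) T, |x r| ∂k.measure) ≤
      Filter.liminf (fun n => ∫ r in Set.Ioc (0 : ℝ) T, |xn n r| ∂(kn n).measure) atTop := by
  obtain ⟨M, hM⟩ := hbd
  -- the liminf is cobounded: the integrals are eventually bounded above
  obtain ⟨C, hC⟩ := isCompact_Icc.exists_bound_of_continuousOn hxc
  have hC0 : 0 ≤ C := le_trans (abs_nonneg _) (by simpa using hC 0 ⟨le_rfl, hT.le⟩)
  have hcob : IsCoboundedUnder (· ≥ ·) atTop
      (fun n => ∫ r in Set.Ioc (0 : ℝ) T, |xn n r| ∂(kn n).measure) := by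
    apply Filter.isCoboundedUnder_ge_of_eventually_le (x := (C + 1) * max M 0) atTop
    filter_upwards [(Metric.tendstoUniformlyOn_iff.mp hxu) 1 one_pos] with n hn
    have hμfin : (kn n).measure (Set.Ioc (0:ℝ) T) ≠ ⊤ := by
      rw [(kn n).measure_Ioc]; exact ENNReal.ofReal_ne_top
    have hint : IntegrableOn (fun r => |xn n r|) (Set.Ioc 0 T) (kn n).measure :=
      ((hxnc n).abs.integrableOn_Icc).mono_set Set.Ioc_subset_Icc_self
    have h1 : ∫ r in Set.Ioc (0:ℝ) T, |xn n r| ∂(kn n).measure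
        ≤ (C + 1) * ((kn n).measure (Set.Ioc (0:ℝ) T)).toReal := by
      apply my_setIntegral_le_const measurableSet_Ioc hμfin hint
      intro r hr
      have hrI : r ∈ Set.Icc (0:ℝ) T := ⟨hr.1.le, hr.2⟩
      have h2 := hn r hrI
      rw [Real.dist_eq] at h2
      have h3 := hC r hrI
      rw [Real.norm_eq_abs] at h3
      have := abs_sub_abs_le_abs_sub (xn n r) (x r)
      rw [abs_sub_comm] at h2
      linarith
    have h4 : ((kn n).measure (Set.Ioc (0:ℝ) T)).toReal = kn n T - kn n 0 := by
      rw [(kn n).measure_Ioc, ENNReal.toReal_ofReal (sub_nonneg.2 ((kn n).mono hT.le))]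
    rw [h4] at h1
    have h5 : kn n T - kn n 0 ≤ max M 0 := le_trans (hM n) (le_max_left _ _)
    nlinarith [sub_nonneg.2 ((kn n).mono hT.le)]
  -- main estimate: for every ε > 0
  refine le_of_forall_pos_le_add fun ε hε => ?_
  have hk0T : k 0 ≤ k T := k.mono hT.le
  set ε₁ := ε / (3 * (k T - k 0 + 1)) with hε₁def
  have hden : (0:ℝ) < 3 * (k T - k 0 + 1) := by linarith
  have hε₁ : 0 < ε₁ := div_pos hε hden
  -- uniform continuity of x on [0,T]
  have hxuc := isCompact_Icc.uniformContinuousOn_of_continuous hxc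
  rw [Metric.uniformContinuousOn_iff] at hxuc
  obtain ⟨δ, hδ, hδx⟩ := hxuc ε₁ hε₁
  -- choose m with 3T/(2m) < δ
  obtain ⟨m, hm⟩ := exists_nat_gt (3 * T / (2 * δ))
  have hmpos : (0:ℝ) < m := lt_trans (by positivity) hm
  have hm1 : 0 < m := by exact_mod_cast hmpos
  set u : ℝ := T / (2 * (m:ℝ)) with hudef
  have hu0 : (0:ℝ) < u := by rw [hudef]; positivity
  have hmuT : (m:ℝ) * (2 * u) = T := by
    rw [hudef]; field_simp
  have hgap : 3 * u < δ := by
    have h1 : 3 * u = 3 * T / (2 * (m:ℝ)) := by rw [hudef]; ring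
    rw [h1, div_lt_iff₀ (by positivity)]
    rw [div_lt_iff₀ (by positivity)] at hm
    nlinarith
  -- choose partition points avoiding Q
  have hpick : ∀ i : ℕ, ∃ s : ℝ,
      (0 < i ∧ i < m) → s ∈ Set.Ioo ((i:ℝ)*(2*u) - u) ((i:ℝ)*(2*u)) ∧ s ∉ Q := by
    intro i
    by_cases hi : 0 < i ∧ i < m
    · obtain ⟨s, hs1, hs2⟩ := exists_notMem_of_null hQnull
        (show (i:ℝ)*(2*u) - u < (i:ℝ)*(2*u) by linarith)
      exact ⟨s, fun _ => ⟨hs1, hs2⟩⟩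
    · exact ⟨0, fun h => absurd h hi⟩
  choose p hp using hpick
  set t : ℕ → ℝ := fun i => if i = 0 then 0 else if i < m then p i else T with htdef
  have ht0 : t 0 = 0 := by simp [htdef]
  have htm : t m = T := by simp [htdef, hm1.ne']
  have htin : ∀ i, 0 < i → i < m →
      ((i:ℝ)*(2*u) - u < t i ∧ t i < (i:ℝ)*(2*u)) ∧ t i ∉ Q := by
    intro i h1 h2
    have hti : t i = p i := by simp [htdef, h1.ne', h2]
    rw [hti]
    have := hp i ⟨h1, h2⟩
    exact ⟨⟨this.1.1, this.1.2⟩, this.2⟩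
  have hTQ : T ∉ Q := fun h => absurd (hQsub h).2 (lt_irrefl T)
  -- membership in [0,T] \ Q for all partition points
  have htmem : ∀ i, i ≤ m → t i ∈ Set.Icc (0:ℝ) T ∧ t i ∉ Q := by
    intro i hi
    rcases Nat.eq_zero_or_pos i with h0 | h0
    · rw [h0, ht0]; exact ⟨⟨le_rfl, hT.le⟩, hQ0⟩
    rcases eq_or_lt_of_le hi with hieq | hilt
    · rw [hieq, htm]; exact ⟨⟨hT.le, le_rfl⟩, hTQ⟩
    obtain ⟨⟨hlo, hhi⟩, hQi⟩ := htin i h0 hilt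
    have hi1 : (1:ℝ) ≤ i := by exact_mod_cast h0
    have him : (i:ℝ) < m := by exact_mod_cast hilt
    have hlow : (0:ℝ) < (i:ℝ)*(2*u) - u := by nlinarith
    have hup : (i:ℝ)*(2*u) < T := by nlinarith
    exact ⟨⟨(hlow.trans hlo).le, (hhi.trans hup).le⟩, hQi⟩
  -- key: strict monotonicity and small gaps
  have hkey : ∀ i, i < m → t i < t (i+1) ∧ t (i+1) - t i < 3 * u := by
    intro i hi
    rcases Nat.eq_zero_or_pos i with h0 | h0
    · subst h0
      simp only [zero_add, ht0]
      rcases eq_or_lt_of_le (Nat.one_le_iff_ne_zero.mpr hm1.ne' : 1 ≤ m) with hmeq | hmlt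
      · have ht1 : t 1 = T := by rw [hmeq]; exact htm
        have hm1' : (m:ℝ) = 1 := by exact_mod_cast hmeq.symm
        have hT2u : T = 2*u := by rw [hm1'] at hmuT; linarith
        rw [ht1]
        constructor
        · linarith
        · linarith
      · obtain ⟨⟨hlo, hhi⟩, _⟩ := htin 1 Nat.one_pos hmlt
        push_cast at hlo hhi
        constructor
        · linarith
        · linarith
    · obtain ⟨⟨hlo, hhi⟩, _⟩ := htin i h0 hi
      rcases eq_or_lt_of_le (Nat.succ_le_of_lt hi) with hieq | hilt
      · -- i+1 = m, so t (i+1) = T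
        have him : i + 1 = m := hieq
        have hti1 : t (i+1) = T := by rw [him]; exact htm
        have hcast : ((i:ℝ)+1) = (m:ℝ) := by exact_mod_cast him
        have hciT : (i:ℝ)*(2*u) = T - 2*u := by
          rw [← hcast] at hmuT; linarith [hmuT]
        rw [hti1]
        constructor
        · linarith
        · linarith
      · obtain ⟨⟨hlo', hhi'⟩, _⟩ := htin (i+1) (Nat.succ_pos i) hilt
        push_cast at hlo' hhi'
        constructor
        · linarith
        · linarith
  have hmono : ∀ i, i < m → t i ≤ t (i+1) := fun i hi => (hkey i hi).1.le
  have hgap' : ∀ i, i < m → t (i+1) - t i < δ := fun i hi => lt_trans (hkey i hi).2 hgap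
  -- abbreviations
  have hxint : IntegrableOn (fun r => |x r|) (Set.Ioc 0 T) k.measure :=
    (hxc.abs.integrableOn_Icc).mono_set Set.Ioc_subset_Icc_self
  have hsubI : ∀ i, i < m → Set.Ioc (t i) (t (i+1)) ⊆ Set.Ioc 0 T := fun i hi =>
    Set.Ioc_subset_Ioc (htmem i hi.le).1.1 (htmem (i+1) hi).1.2
  -- Step A : upper bound for the k-integral
  have hA : (∫ r in Set.Ioc (0:ℝ) T, |x r| ∂k.measure)
      ≤ ∑ i ∈ Finset.range m, (|x (t (i+1))| + ε₁) * (k (t (i+1)) - k (t i)) := by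
    have hsplit := integral_Ioc_partition k.measure (fun r => |x r|) t m hmono
      (by rw [ht0, htm]; exact hxint)
    rw [ht0, htm] at hsplit
    rw [hsplit]
    apply Finset.sum_le_sum
    intro i hi
    rw [Finset.mem_range] at hi
    have hμ : k.measure (Set.Ioc (t i) (t (i+1))) ≠ ⊤ := by
      rw [k.measure_Ioc]; exact ENNReal.ofReal_ne_top
    have htoReal : (k.measure (Set.Ioc (t i) (t (i+1)))).toReal = k (t (i+1)) - k (t i) := by
      rw [k.measure_Ioc, ENNReal.toReal_ofReal (sub_nonneg.2 (k.mono (hmono i hi)))]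
    rw [← htoReal]
    apply my_setIntegral_le_const measurableSet_Ioc hμ (hxint.mono_set (hsubI i hi))
    intro r hr
    have hrI : r ∈ Set.Icc (0:ℝ) T := ⟨((htmem i hi.le).1.1.trans hr.1.le), hr.2.trans (htmem (i+1) hi).1.2⟩
    have ht1I : t (i+1) ∈ Set.Icc (0:ℝ) T := (htmem (i+1) hi).1
    have hd : dist r (t (i+1)) < δ := by
      rw [Real.dist_eq, abs_lt]
      have := hgap' i hi
      constructor <;> [linarith [hr.1]; linarith [hr.2]]
    have h2 := hδx r hrI (t (i+1)) ht1I hd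
    rw [Real.dist_eq] at h2
    have habs := abs_sub_abs_le_abs_sub (x r) (x (t (i+1)))
    linarith
  -- Step B : eventual lower bound for the kn-integrals
  have hB : ∀ᶠ n in atTop,
      (∑ i ∈ Finset.range m, (|x (t (i+1))| - 2*ε₁) * ((kn n) (t (i+1)) - (kn n) (t i)))
        ≤ ∫ r in Set.Ioc (0:ℝ) T, |xn n r| ∂(kn n).measure := by
    filter_upwards [(Metric.tendstoUniformlyOn_iff.mp hxu) ε₁ hε₁] with n hn
    have hxnint : IntegrableOn (fun r => |xn n r|) (Set.Ioc 0 T) (kn n).measure :=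
      ((hxnc n).abs.integrableOn_Icc).mono_set Set.Ioc_subset_Icc_self
    have hsplit := integral_Ioc_partition (kn n).measure (fun r => |xn n r|) t m hmono
      (by rw [ht0, htm]; exact hxnint)
    rw [ht0, htm] at hsplit
    rw [hsplit]
    apply Finset.sum_le_sum
    intro i hi
    rw [Finset.mem_range] at hi
    have hμ : (kn n).measure (Set.Ioc (t i) (t (i+1))) ≠ ⊤ := by
      rw [(kn n).measure_Ioc]; exact ENNReal.ofReal_ne_top
    have htoReal : ((kn n).measure (Set.Ioc (t i) (t (i+1)))).toReal
        = kn n (t (i+1)) - kn n (t i) := by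
      rw [(kn n).measure_Ioc, ENNReal.toReal_ofReal (sub_nonneg.2 ((kn n).mono (hmono i hi)))]
    rw [← htoReal]
    apply my_const_le_setIntegral measurableSet_Ioc hμ (hxnint.mono_set (hsubI i hi))
    intro r hr
    have hrI : r ∈ Set.Icc (0:ℝ) T := ⟨((htmem i hi.le).1.1.trans hr.1.le), hr.2.trans (htmem (i+1) hi).1.2⟩
    have ht1I : t (i+1) ∈ Set.Icc (0:ℝ) T := (htmem (i+1) hi).1
    have hd : dist r (t (i+1)) < δ := by
      rw [Real.dist_eq, abs_lt]
      have := hgap' i hi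
      constructor <;> [linarith [hr.1]; linarith [hr.2]]
    have h2 := hδx r hrI (t (i+1)) ht1I hd
    rw [Real.dist_eq] at h2
    have h3 := hn r hrI
    rw [Real.dist_eq] at h3
    have habs1 := abs_sub_abs_le_abs_sub (x (t (i+1))) (x r)
    have habs2 := abs_sub_abs_le_abs_sub (x r) (xn n r)
    rw [abs_sub_comm] at habs1
    linarith
  -- Step C : convergence of the approximating sums
  have hC2 : Tendsto (fun n => ∑ i ∈ Finset.range m,
      (|x (t (i+1))| - 2*ε₁) * ((kn n) (t (i+1)) - (kn n) (t i))) atTop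
      (𝓝 (∑ i ∈ Finset.range m, (|x (t (i+1))| - 2*ε₁) * (k (t (i+1)) - k (t i)))) := by
    apply tendsto_finset_sum
    intro i hi
    rw [Finset.mem_range] at hi
    have h1 := hkconv (t (i+1)) ⟨(htmem (i+1) hi).1, (htmem (i+1) hi).2⟩
    have h2 := hkconv (t i) ⟨(htmem i hi.le).1, (htmem i hi.le).2⟩
    exact (h1.sub h2).const_mul _
  -- Step D : pass to the liminf
  have hD : (∑ i ∈ Finset.range m, (|x (t (i+1))| - 2*ε₁) * (k (t (i+1)) - k (t i)))
      ≤ Filter.liminf (fun n => ∫ r in Set.Ioc (0:ℝ) T, |xn n r| ∂(kn n).measure) atTop := by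
    rw [← hC2.liminf_eq]
    exact liminf_le_liminf hB hC2.isBoundedUnder_ge hcob
  -- Step E : combine
  have htel : ∑ i ∈ Finset.range m, (k (t (i+1)) - k (t i)) = k T - k 0 := by
    rw [Finset.sum_range_sub (fun i => k (t i)), ht0, htm]
  have hsum : ∑ i ∈ Finset.range m, (|x (t (i+1))| + ε₁) * (k (t (i+1)) - k (t i))
      = (∑ i ∈ Finset.range m, (|x (t (i+1))| - 2*ε₁) * (k (t (i+1)) - k (t i)))
        + 3*ε₁*(k T - k 0) := by
    rw [← htel, Finset.mul_sum, ← Finset.sum_add_distrib]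
    exact Finset.sum_congr rfl fun i _ => by ring
  have h3 : 3 * ε₁ * (k T - k 0) ≤ ε := by
    have h4 : ε₁ * (3 * (k T - k 0 + 1)) = ε := by
      rw [hε₁def]; field_simp; exact div_self (ne_of_gt (by linarith))
    nlinarith [hε₁.le, hk0T]
  calc (∫ r in Set.Ioc (0:ℝ) T, |x r| ∂k.measure)
      ≤ ∑ i ∈ Finset.range m, (|x (t (i+1))| + ε₁) * (k (t (i+1)) - k (t i)) := hA
    _ = (∑ i ∈ Finset.range m, (|x (t (i+1))| - 2*ε₁) * (k (t (i+1)) - k (t i)))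
        + 3*ε₁*(k T - k 0) := hsum
    _ ≤ Filter.liminf (fun n => ∫ r in Set.Ioc (0:ℝ) T, |xn n r| ∂(kn n).measure) atTop + ε := by
        linarith [hD]
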